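/- Let H be a complex Hilbert space, let T : H → H be a bounded self-adjoint operator with T ≥ 0, and let P be the orthogonal projection onto the kernel of T. Let l ≥ 1 be an integer, f₀ : ℝ → ℂ a Schwartz function not identically zero on (0,∞), and f(s) = s^l f₀(s). Suppose a > 0, a ≠ 1, and there exist constants 0 < A ≤ B < ∞ with A ≤ Σ_{j∈ℤ} |f(a^{2j}s)|² ≤ B for every s > 0 (the Daubechies condition). Then for every F ∈ H the series Σ_{j∈ℤ} ⟨|f|²(a^{2j}T)F, F⟩ converges (where |f|²(a^{2j}T) denotes the continuous functional calculus of T applied to s ↦ |f(a^{2j}s)|²), and A·‖F − PF‖² ≤ Σ_{j∈ℤ} ⟨|f|²(a^{2j}T)F, F⟩ ≤ B·‖F − PF‖². -/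

import Mathlib

open Filter Topology ContinuousLinearMap

section helpers
variable {H : Type*} [NormedAddCommGroup H] [InnerProductSpace ℂ H] [CompleteSpace H]

lemma my_inner_mono (X Y : H →L[ℂ] H) (h : X ≤ Y) (G : H) :
    (inner ℂ (X G) G : ℂ).re ≤ (inner ℂ (Y G) G : ℂ).re := by
  have h2 := ((ContinuousLinearMap.le_def X Y).mp h).2 G
  rw [ContinuousLinearMap.reApplyInnerSelf_apply] at h2
  simp only [ContinuousLinearMap.sub_apply, inner_sub_left, map_sub] at h2
  have : (RCLike.re (inner ℂ (X G) G : ℂ) : ℝ) ≤ RCLike.re (inner ℂ (Y G) G : ℂ) := by linarith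
  simpa using this

lemma my_inner_nonneg (X : H →L[ℂ] H) (h : 0 ≤ X) (G : H) :
    0 ≤ (inner ℂ (X G) G : ℂ).re := by
  simpa using my_inner_mono 0 X h G

lemma my_inner_selfadj (X : H →L[ℂ] H) (hX : IsSelfAdjoint X) (u v : H) :
    (inner ℂ (X u) v : ℂ) = (inner ℂ u (X v) : ℂ) := by
  have h := ContinuousLinearMap.adjoint_inner_left X v u
  rw [hX.adjoint_eq] at h
  exact h

lemma my_smul_one_inner (r : ℝ) (G : H) :
    (inner ℂ ((algebraMap ℝ (H →L[ℂ] H) r) G) G : ℂ).re = r * ‖G‖ ^ 2 := by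
  rw [Algebra.algebraMap_eq_smul_one]
  have h1 : ((r • (1 : H →L[ℂ] H)) G) = r • G := by
    simp
  have h2 : (r • G) = ((r : ℂ) • G) := RCLike.real_smul_eq_coe_smul r G
  have h3 : (inner ℂ ((r : ℂ) • G) G : ℂ) = (r : ℂ) * inner ℂ G G := by
    rw [inner_smul_left]
    simp [Complex.conj_ofReal]
  rw [h1, h2, h3]
  have h4 : ((r : ℂ) * inner ℂ G G).re = r * (inner ℂ G G : ℂ).re := by
    simp [Complex.re_ofReal_mul]
  rw [h4, ← RCLike.re_to_complex, inner_self_eq_norm_sq]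

lemma my_norm_sq_cfc (T : H →L[ℂ] H) (g : ℝ → ℝ) (hg : Continuous g) (u : H) :
    ‖cfc g T u‖ ^ 2 = (inner ℂ ((cfc (fun s : ℝ => g s ^ 2) T) u) u : ℂ).re := by
  have hsa : IsSelfAdjoint (cfc g T) := cfc_predicate g T
  have h1 : (inner ℂ (cfc g T u) (cfc g T u) : ℂ) = inner ℂ u ((cfc g T * cfc g T) u) := by
    rw [my_inner_selfadj _ hsa]
    rfl
  have h2 : cfc g T * cfc g T = cfc (fun s : ℝ => g s ^ 2) T := by
    rw [← cfc_mul g g T (hg.continuousOn) (hg.continuousOn)]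
    simp [pow_two]
  have h3 : ‖cfc g T u‖ ^ 2 = (inner ℂ (cfc g T u) (cfc g T u) : ℂ).re := by
    rw [← RCLike.re_to_complex, inner_self_eq_norm_sq]
  rw [h3, h1, h2, ← RCLike.re_to_complex, ← RCLike.re_to_complex, inner_re_symm]

lemma my_ker_vanish (T : H →L[ℂ] H) (hT : IsSelfAdjoint T) (r : ℝ → ℝ) (hr : Continuous r)
    (x : H) (hx : T x = 0) :
    cfc (fun s : ℝ => s * r s) T x = 0 := by
  have h1 : cfc (fun s : ℝ => s * r s) T = cfc r T * cfc (id : ℝ → ℝ) T := by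
    rw [← cfc_mul r id T (hr.continuousOn) (continuous_id.continuousOn)]
    simp [mul_comm]
  rw [h1, cfc_id ℝ T hT]
  simp [ContinuousLinearMap.mul_apply, hx]

set_option maxHeartbeats 2000000 in
lemma my_psi_tendsto (T : H →L[ℂ] H) (hT : T.IsPositive)
    (G : H) (hG : G ∈ (LinearMap.ker (T : H →ₗ[ℂ] H) : Submodule ℂ H)ᗮ) :
    Tendsto (fun n : ℕ =>
        (inner ℂ (cfc (fun s : ℝ => min 1 (max 0 (2 - ((n : ℝ) + 1) * s))) T G) G : ℂ).re)
      atTop (𝓝 0) := by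
  set ψ : ℕ → ℝ → ℝ := fun n s => min 1 (max 0 (2 - ((n : ℝ) + 1) * s)) with hψdef
  have hψc : ∀ n, Continuous (ψ n) := by
    intro n
    fun_prop
  have hTsa : IsSelfAdjoint T := hT.isSelfAdjoint
  have hTnn : (0 : H →L[ℂ] H) ≤ T := (ContinuousLinearMap.nonneg_iff_isPositive T).mpr hT
  have hspec : ∀ x ∈ spectrum ℝ T, 0 ≤ x := fun x hx => spectrum_nonneg_of_nonneg hTnn hx
  have hψ0 : ∀ n s, 0 ≤ ψ n s := fun n s =>
    le_min zero_le_one (le_max_left 0 _)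
  have hψ1 : ∀ n s, ψ n s ≤ 1 := fun n s => min_le_left _ _
  have hanti : ∀ s, 0 ≤ s → ∀ n m : ℕ, n ≤ m → ψ m s ≤ ψ n s := by
    intro s hs n m hnm
    have : 2 - ((m : ℝ) + 1) * s ≤ 2 - ((n : ℝ) + 1) * s := by
      have hnm' : (n : ℝ) ≤ (m : ℝ) := by exact_mod_cast hnm
      nlinarith
    exact min_le_min le_rfl (max_le_max le_rfl this)
  set q : ℕ → ℝ := fun n => (inner ℂ (cfc (fun s : ℝ => ψ n s ^ 2) T G) G : ℂ).re with hqdef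
  have hψsqc : ∀ n, Continuous (fun s : ℝ => ψ n s ^ 2) := fun n => (hψc n).pow 2
  have hqanti : Antitone q := by
    intro n m hnm
    apply my_inner_mono
    apply cfc_mono (fun x hx => pow_le_pow_left₀ (hψ0 m x) (hanti x (hspec x hx) n m hnm) 2)
      ((hψsqc m).continuousOn) ((hψsqc n).continuousOn)
  have hq0 : ∀ n, 0 ≤ q n := by
    intro n
    exact my_inner_nonneg _ (cfc_nonneg (fun x _ => sq_nonneg (ψ n x))) G
  have hqcauchy : CauchySeq q :=
    (tendsto_atTop_ciInf hqanti ⟨0, by rintro x ⟨n, rfl⟩; exact hq0 n⟩).cauchySeq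
  set v : ℕ → H := fun n => cfc (ψ n) T G with hvdef
  have hdist : ∀ n m : ℕ, n ≤ m → ‖v n - v m‖ ^ 2 ≤ q n - q m := by
    intro n m hnm
    have hsub : v n - v m = cfc (fun s => ψ n s - ψ m s) T G := by
      rw [cfc_sub (ψ n) (ψ m) T ((hψc n).continuousOn) ((hψc m).continuousOn)]
      simp [hvdef]
    rw [hsub, my_norm_sq_cfc T (fun s => ψ n s - ψ m s) ((hψc n).sub (hψc m))]
    have hle : cfc (fun s : ℝ => (ψ n s - ψ m s) ^ 2) T ≤
        cfc (fun s : ℝ => ψ n s ^ 2 - ψ m s ^ 2) T := by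
      apply cfc_mono
      · intro x hx
        have h1 := hψ0 m x
        have h2 := hanti x (hspec x hx) n m hnm
        nlinarith
      · exact (((hψc n).sub (hψc m)).pow 2).continuousOn
      · exact ((hψsqc n).sub (hψsqc m)).continuousOn
    refine le_trans (my_inner_mono _ _ hle G) ?_
    rw [cfc_sub (fun s => ψ n s ^ 2) (fun s => ψ m s ^ 2) T
      ((hψsqc n).continuousOn) ((hψsqc m).continuousOn)]
    simp only [ContinuousLinearMap.sub_apply, inner_sub_left, Complex.sub_re]
    exact le_rfl
  have hvcauchy : CauchySeq v := by
    rw [Metric.cauchySeq_iff']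
    intro ε hε
    obtain ⟨N, hN⟩ := Metric.cauchySeq_iff'.mp hqcauchy (ε ^ 2) (by positivity)
    refine ⟨N, fun n hn => ?_⟩
    have h1 := hdist N n hn
    have h2 := hN n hn
    rw [Real.dist_eq] at h2
    have h3 : ‖v N - v n‖ ^ 2 < ε ^ 2 :=
      lt_of_le_of_lt h1 (lt_of_le_of_lt (le_abs_self _) (by rwa [abs_sub_comm]))
    have h4 : ‖v n - v N‖ ^ 2 < ε ^ 2 := by rwa [norm_sub_rev]
    rw [dist_eq_norm]
    exact lt_of_pow_lt_pow_left₀ 2 hε.le h4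
  obtain ⟨y, hy⟩ := cauchySeq_tendsto_of_complete hvcauchy
  have hTv : ∀ n : ℕ, ‖T (v n)‖ ≤ 2 / ((n : ℝ) + 1) * ‖G‖ := by
    intro n
    have hcomp : cfc (fun s : ℝ => s * ψ n s) T = T * cfc (ψ n) T := by
      have h := cfc_mul id (ψ n) T continuous_id.continuousOn ((hψc n).continuousOn)
      rw [cfc_id ℝ T hTsa] at h
      exact h
    have hTvn : T (v n) = cfc (fun s : ℝ => s * ψ n s) T G := by
      rw [hcomp]; rfl
    have hb : ∀ x ∈ spectrum ℝ T, ‖x * ψ n x‖ ≤ 2 / ((n : ℝ) + 1) := by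
      intro x hx
      have hx0 := hspec x hx
      have hn1 : (0 : ℝ) < (n : ℝ) + 1 := by positivity
      rcases le_or_gt x (2 / ((n : ℝ) + 1)) with h | h
      · rw [Real.norm_eq_abs, abs_of_nonneg (mul_nonneg hx0 (hψ0 n x))]
        calc x * ψ n x ≤ x * 1 := mul_le_mul_of_nonneg_left (hψ1 n x) hx0
        _ ≤ 2 / ((n : ℝ) + 1) := by rwa [mul_one]
      · have hz : ψ n x = 0 := by
          have hneg : 2 - ((n : ℝ) + 1) * x ≤ 0 := by
            rw [div_lt_iff₀ hn1] at h
            nlinarith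
          simp [hψdef, max_eq_left hneg, min_eq_right (zero_le_one)]
        rw [hz, mul_zero, norm_zero]
        positivity
    have hnorm : ‖cfc (fun s : ℝ => s * ψ n s) T‖ ≤ 2 / ((n : ℝ) + 1) :=
      norm_cfc_le (by positivity) hb
    rw [hTvn]
    calc ‖cfc (fun s : ℝ => s * ψ n s) T G‖ ≤ ‖cfc (fun s : ℝ => s * ψ n s) T‖ * ‖G‖ :=
      ContinuousLinearMap.le_opNorm _ _
    _ ≤ 2 / ((n : ℝ) + 1) * ‖G‖ := mul_le_mul_of_nonneg_right hnorm (norm_nonneg G)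
  have hTy : T y = 0 := by
    have h1 : Tendsto (fun n => T (v n)) atTop (𝓝 (T y)) := (T.continuous.tendsto y).comp hy
    have h2 : Tendsto (fun n => T (v n)) atTop (𝓝 0) := by
      apply squeeze_zero_norm hTv
      have h3 : Tendsto (fun n : ℕ => 2 / ((n : ℝ) + 1) * ‖G‖) atTop (𝓝 (0 * ‖G‖)) := by
        apply Tendsto.mul_const
        apply Tendsto.div_atTop tendsto_const_nhds
        exact tendsto_atTop_add_const_right atTop 1 tendsto_natCast_atTop_atTop
      simpa using h3
    exact tendsto_nhds_unique h1 h2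
  have hyG : (inner ℂ y G : ℂ) = 0 := by
    have hker : y ∈ LinearMap.ker (T : H →ₗ[ℂ] H) := by
      rw [LinearMap.mem_ker]
      exact_mod_cast hTy
    exact (Submodule.mem_orthogonal _ G).mp hG y hker
  have hfinal : Tendsto (fun n => (inner ℂ (v n) G : ℂ).re) atTop (𝓝 ((inner ℂ y G : ℂ).re)) :=
    (Complex.continuous_re.tendsto _).comp (hy.inner tendsto_const_nhds)
  rw [hyG] at hfinal
  simpa using hfinal

end helpers

section main
variable {H : Type*} [NormedAddCommGroup H] [InnerProductSpace ℂ H] [CompleteSpace H]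

set_option maxHeartbeats 2000000 in
lemma main_aux (T : H →L[ℂ] H) (hT : T.IsPositive)
    (g : ℤ → ℝ → ℝ) (hgc : ∀ j, Continuous (g j)) (hg0 : ∀ j s, 0 ≤ g j s)
    (hgzero : ∀ j, g j 0 = 0)
    (hker : ∀ j (x : H), T x = 0 → cfc (g j) T x = 0)
    (A B : ℝ) (hA : 0 < A) (hAB : A ≤ B)
    (hDaub : ∀ s : ℝ, 0 < s → Summable (fun j : ℤ => g j s) ∧
      A ≤ ∑' j : ℤ, g j s ∧ (∑' j : ℤ, g j s) ≤ B)
    (F PF : H) (hPF : T PF = 0)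
    (hGperp : F - PF ∈ (LinearMap.ker (T : H →ₗ[ℂ] H) : Submodule ℂ H)ᗮ) :
    Summable (fun j : ℤ => (inner ℂ ((cfc (g j) T) F) F : ℂ).re) ∧
    A * ‖F - PF‖ ^ 2 ≤ (∑' j : ℤ, (inner ℂ ((cfc (g j) T) F) F : ℂ).re) ∧
    (∑' j : ℤ, (inner ℂ ((cfc (g j) T) F) F : ℂ).re) ≤ B * ‖F - PF‖ ^ 2 := by
  classical
  set G := F - PF with hGdef
  have hTsa : IsSelfAdjoint T := hT.isSelfAdjoint
  have hTnn : (0 : H →L[ℂ] H) ≤ T := (ContinuousLinearMap.nonneg_iff_isPositive T).mpr hT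
  have hspec0 : ∀ x ∈ spectrum ℝ T, 0 ≤ x := fun x hx => spectrum_nonneg_of_nonneg hTnn hx
  set M : ℝ := ‖T‖ * ‖(1 : H →L[ℂ] H)‖ with hM
  have hspecM : ∀ x ∈ spectrum ℝ T, x ≤ M := by
    intro x hx
    have h := spectrum.norm_le_norm_mul_of_mem hx
    exact (le_abs_self x).trans (by simpa using h)
  -- reduction from F to G
  have hredc : ∀ j : ℤ, (inner ℂ ((cfc (g j) T) F) F : ℂ) = (inner ℂ ((cfc (g j) T) G) G : ℂ) := by
    intro j
    have hFd : F = G + PF := by rw [hGdef]; abel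
    have h1 : cfc (g j) T F = cfc (g j) T G := by
      conv_lhs => rw [hFd]
      rw [map_add, hker j PF hPF, add_zero]
    rw [h1]
    conv_lhs => rw [hFd]
    rw [inner_add_right]
    have h2 : (inner ℂ ((cfc (g j) T) G) PF : ℂ) = 0 := by
      rw [my_inner_selfadj _ (cfc_predicate (g j) T), hker j PF hPF, inner_zero_right]
    rw [h2, add_zero]
  -- partial sums as cfc of a finite sum
  have hsum_eq : ∀ s : Finset ℤ, ∑ j ∈ s, (inner ℂ ((cfc (g j) T) G) G : ℂ).re
      = (inner ℂ ((cfc (fun x : ℝ => ∑ j ∈ s, g j x) T) G) G : ℂ).re := by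
    intro s
    have h1 := cfc_sum g T s (fun i _ => (hgc i).continuousOn)
    have hfun : (∑ j ∈ s, g j) = fun x : ℝ => ∑ j ∈ s, g j x := by
      ext x; simp
    rw [← hfun, h1]
    rw [ContinuousLinearMap.sum_apply, sum_inner]
    rw [Complex.re_sum]
  have hSc : ∀ s : Finset ℤ, Continuous (fun x : ℝ => ∑ j ∈ s, g j x) :=
    fun s => continuous_finset_sum s (fun j _ => hgc j)
  -- upper bound on partial sums
  have hSbound : ∀ s : Finset ℤ, ∀ x ∈ spectrum ℝ T, ∑ j ∈ s, g j x ≤ B := by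
    intro s x hx
    rcases eq_or_lt_of_le (hspec0 x hx) with h | h
    · simp [← h, hgzero]
      linarith
    · obtain ⟨hsumm, _, hB⟩ := hDaub x h
      exact le_trans (Summable.sum_le_tsum s (fun j _ => hg0 j x) hsumm) hB
  have hpartial : ∀ s : Finset ℤ, ∑ j ∈ s, (inner ℂ ((cfc (g j) T) G) G : ℂ).re ≤ B * ‖G‖ ^ 2 := by
    intro s
    rw [hsum_eq]
    have h1 : cfc (fun x : ℝ => ∑ j ∈ s, g j x) T ≤ algebraMap ℝ (H →L[ℂ] H) B :=
      cfc_le_algebraMap _ B T (hSbound s) ((hSc s).continuousOn) hTsa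
    refine (my_inner_mono _ _ h1 G).trans ?_
    rw [my_smul_one_inner]
  have hcnonneg : ∀ j : ℤ, 0 ≤ (inner ℂ ((cfc (g j) T) G) G : ℂ).re :=
    fun j => my_inner_nonneg _ (cfc_nonneg (fun x _ => hg0 j x)) G
  have hsummable : Summable (fun j : ℤ => (inner ℂ ((cfc (g j) T) G) G : ℂ).re) :=
    summable_of_sum_le hcnonneg hpartial
  have htsum_le : (∑' j : ℤ, (inner ℂ ((cfc (g j) T) G) G : ℂ).re) ≤ B * ‖G‖ ^ 2 :=
    Summable.tsum_le_of_sum_le hsummable hpartial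
  -- lower bound
  set ψ : ℕ → ℝ → ℝ := fun n s => min 1 (max 0 (2 - ((n : ℝ) + 1) * s)) with hψdef
  have hψc : ∀ n, Continuous (ψ n) := by intro n; fun_prop
  have hψ0 : ∀ n s, 0 ≤ ψ n s := fun n s => le_min zero_le_one (le_max_left 0 _)
  have hψ1 : ∀ n s, ψ n s ≤ 1 := fun n s => min_le_left _ _
  have hpsit := my_psi_tendsto T hT G hGperp
  have hstep : ∀ ε > (0:ℝ), ∀ n : ℕ,
      (A - ε) * (‖G‖ ^ 2 - (inner ℂ ((cfc (ψ n) T) G) G : ℂ).re)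
        ≤ ∑' j : ℤ, (inner ℂ ((cfc (g j) T) G) G : ℂ).re := by
    intro ε hε n
    -- compactness: a finite set whose partial sum is ≥ A - ε on [1/(n+1), M]
    obtain ⟨s, hs⟩ : ∃ s : Finset ℤ,
        ∀ x ∈ Set.Icc (1 / ((n : ℝ) + 1)) M, A - ε ≤ ∑ j ∈ s, g j x := by
      set K := Set.Icc (1 / ((n : ℝ) + 1)) M with hK
      have hKc : IsCompact K := isCompact_Icc
      have hKx : ∀ x : K, ∃ t : Finset ℤ, A - ε / 2 < ∑ j ∈ t, g j (x : ℝ) := by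
        rintro ⟨x, hx⟩
        have hxpos : 0 < x := lt_of_lt_of_le (by positivity) hx.1
        obtain ⟨hsumm, hAx, _⟩ := hDaub x hxpos
        have hlt : A - ε / 2 < ∑' j : ℤ, g j x := by linarith
        have hev := hsumm.hasSum.eventually (eventually_gt_nhds hlt)
        exact hev.exists
      choose t ht using hKx
      set U : K → Set ℝ := fun i => {y : ℝ | A - ε < ∑ j ∈ t i, g j y} with hU
      have hUo : ∀ i, IsOpen (U i) := by
        intro i
        exact isOpen_lt continuous_const (continuous_finset_sum _ (fun j _ => hgc j))
      have hcov : K ⊆ ⋃ i, U i := by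
        intro x hx
        refine Set.mem_iUnion.mpr ⟨⟨x, hx⟩, ?_⟩
        have := ht ⟨x, hx⟩
        simp only [hU, Set.mem_setOf_eq]
        linarith
      obtain ⟨fi, hfi⟩ := hKc.elim_finite_subcover U hUo hcov
      refine ⟨fi.biUnion (fun i => t i), fun x hx => ?_⟩
      obtain ⟨i, hi, hxU⟩ := Set.mem_iUnion₂.mp (hfi hx)
      have hsub : t i ⊆ fi.biUnion (fun i => t i) := Finset.subset_biUnion_of_mem _ hi
      have hmono := Finset.sum_le_sum_of_subset_of_nonneg hsub
        (fun j _ _ => hg0 j x)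
      have : A - ε < ∑ j ∈ t i, g j x := hxU
      linarith
    -- operator inequality
    have hop : cfc (fun x : ℝ => (A - ε) * (1 - ψ n x)) T
        ≤ cfc (fun x : ℝ => ∑ j ∈ s, g j x) T := by
      apply cfc_mono
      · intro x hx
        have hx0 := hspec0 x hx
        have hxM := hspecM x hx
        have hSnn : 0 ≤ ∑ j ∈ s, g j x := Finset.sum_nonneg (fun j _ => hg0 j x)
        have hn1 : (0:ℝ) < (n : ℝ) + 1 := by positivity
        rcases le_or_gt x (1 / ((n : ℝ) + 1)) with h | h
        · have hone : ψ n x = 1 := by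
            have h2 : 1 ≤ 2 - ((n : ℝ) + 1) * x := by
              have := (le_div_iff₀ hn1).mp h
              nlinarith
            have : (1:ℝ) ≤ max 0 (2 - ((n : ℝ) + 1) * x) := le_trans h2 (le_max_right _ _)
            simp [hψdef, min_eq_left this]
          rw [hone]
          simpa using hSnn
        · have hSx : A - ε ≤ ∑ j ∈ s, g j x := hs x ⟨h.le, hxM⟩
          have hk0 : 0 ≤ 1 - ψ n x := by linarith [hψ1 n x]
          have hk1 : 1 - ψ n x ≤ 1 := by linarith [hψ0 n x]
          rcases le_or_gt (A - ε) 0 with hAe | hAe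
          · nlinarith
          · nlinarith
      · exact (continuous_const.mul (continuous_const.sub (hψc n))).continuousOn
      · exact (hSc s).continuousOn
    have h2 := my_inner_mono _ _ hop G
    have e1 : cfc (fun x : ℝ => (A - ε) * (1 - ψ n x)) T
        = (A - ε) • cfc (fun x : ℝ => 1 - ψ n x) T :=
      cfc_const_mul (A - ε) _ T ((continuous_const.sub (hψc n)).continuousOn)
    have e2 : cfc (fun x : ℝ => 1 - ψ n x) T = 1 - cfc (ψ n) T := by
      rw [cfc_sub (fun _ : ℝ => (1:ℝ)) (ψ n) T continuousOn_const ((hψc n).continuousOn),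
        cfc_const 1 T hTsa, map_one]
    have e3 : (inner ℂ ((cfc (fun x : ℝ => (A - ε) * (1 - ψ n x)) T) G) G : ℂ).re
        = (A - ε) * (‖G‖ ^ 2 - (inner ℂ ((cfc (ψ n) T) G) G : ℂ).re) := by
      rw [e1, e2]
      have h4 : (((A - ε) • (1 - cfc (ψ n) T)) G) = (A - ε) • (G - cfc (ψ n) T G) := by
        simp [ContinuousLinearMap.smul_apply, ContinuousLinearMap.sub_apply]
      rw [h4]
      have h5 : ((A - ε) • (G - cfc (ψ n) T G)) = ((A - ε : ℝ) : ℂ) • (G - cfc (ψ n) T G) :=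
        RCLike.real_smul_eq_coe_smul _ _
      rw [h5, inner_smul_left, Complex.conj_ofReal, Complex.re_ofReal_mul, inner_sub_left,
        Complex.sub_re]
      have h6 : (inner ℂ G G : ℂ).re = ‖G‖ ^ 2 := by
        rw [← RCLike.re_to_complex, inner_self_eq_norm_sq]
      rw [h6]
    rw [e3, ← hsum_eq s] at h2
    exact le_trans h2 (Summable.sum_le_tsum s (fun j _ => hcnonneg j) hsummable)
  -- pass to the limit in n, then in ε
  have hεstep : ∀ ε > (0:ℝ), (A - ε) * ‖G‖ ^ 2 ≤
      ∑' j : ℤ, (inner ℂ ((cfc (g j) T) G) G : ℂ).re := by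
    intro ε hε
    have hlim : Tendsto (fun n : ℕ => (A - ε) * (‖G‖ ^ 2 - (inner ℂ ((cfc (ψ n) T) G) G : ℂ).re))
        atTop (𝓝 ((A - ε) * (‖G‖ ^ 2 - 0))) :=
      (hpsit.const_sub (‖G‖ ^ 2)).const_mul (A - ε)
    rw [sub_zero] at hlim
    exact le_of_tendsto hlim (Filter.Eventually.of_forall (fun n => hstep ε hε n))
  have hlow : A * ‖G‖ ^ 2 ≤ ∑' j : ℤ, (inner ℂ ((cfc (g j) T) G) G : ℂ).re := by
    apply le_of_forall_pos_le_add
    intro ε hε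
    have hd : (0:ℝ) < ‖G‖ ^ 2 + 1 := by positivity
    have hε' : 0 < ε / (‖G‖ ^ 2 + 1) := by positivity
    have h := hεstep _ hε'
    have hb : ε / (‖G‖ ^ 2 + 1) * ‖G‖ ^ 2 ≤ ε := by
      rw [div_mul_eq_mul_div, div_le_iff₀ hd]
      nlinarith [sq_nonneg ‖G‖]
    nlinarith
  have hfun : (fun j : ℤ => (inner ℂ ((cfc (g j) T) F) F : ℂ).re)
      = fun j : ℤ => (inner ℂ ((cfc (g j) T) G) G : ℂ).re :=
    funext fun j => by rw [hredc j]
  refine ⟨hfun ▸ hsummable, ?_, ?_⟩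
  · rw [show (∑' j : ℤ, (inner ℂ ((cfc (g j) T) F) F : ℂ).re)
        = ∑' j : ℤ, (inner ℂ ((cfc (g j) T) G) G : ℂ).re from by rw [hfun]]
    exact hlow
  · rw [show (∑' j : ℤ, (inner ℂ ((cfc (g j) T) F) F : ℂ).re)
        = ∑' j : ℤ, (inner ℂ ((cfc (g j) T) G) G : ℂ).re from by rw [hfun]]
    exact htsum_le

end main


/-- Discrete spectral theorem application: with `T` bounded positive self-adjoint on a
complex Hilbert space, `P` the orthogonal projection onto `ker T`, `f s = s^l f₀ s`,
and `a > 0`, `a ≠ 1` satisfying the Daubechies condition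
`0 < A ≤ Σ_{j∈ℤ} |f(a^{2j}s)|² ≤ B < ∞` for all `s > 0`, the series
`Σ_{j∈ℤ} ⟨|f|²(a^{2j}T)F, F⟩` converges and lies between `A‖F-PF‖²` and `B‖F-PF‖²`. -/
theorem stmt3 {H : Type*} [NormedAddCommGroup H] [InnerProductSpace ℂ H] [CompleteSpace H]
    (T : H →L[ℂ] H) (hT : T.IsPositive)
    (P : H →L[ℂ] H)
    (hP : ∀ x : H, P x ∈ LinearMap.ker (T : H →ₗ[ℂ] H) ∧
      x - P x ∈ (LinearMap.ker (T : H →ₗ[ℂ] H) : Submodule ℂ H)ᗮ)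
    (l : ℕ) (hl : 1 ≤ l)
    (f₀ : SchwartzMap ℝ ℂ) (hf₀ : ∃ s : ℝ, 0 < s ∧ f₀ s ≠ 0)
    (f : ℝ → ℂ) (hf : ∀ s : ℝ, f s = (s : ℂ) ^ l * f₀ s)
    (a : ℝ) (ha : 0 < a) (ha1 : a ≠ 1)
    (A B : ℝ) (hA : 0 < A) (hAB : A ≤ B)
    (hDaub : ∀ s : ℝ, 0 < s →
      Summable (fun j : ℤ => ‖f (a ^ (2 * j) * s)‖ ^ 2) ∧
      A ≤ ∑' j : ℤ, ‖f (a ^ (2 * j) * s)‖ ^ 2 ∧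
      (∑' j : ℤ, ‖f (a ^ (2 * j) * s)‖ ^ 2) ≤ B)
    (F : H) :
    Summable (fun j : ℤ =>
      (inner ℂ ((cfc (fun s : ℝ => ‖f (a ^ (2 * j) * s)‖ ^ 2) T) F) F : ℂ).re) ∧
    A * ‖F - P F‖ ^ 2 ≤
      (∑' j : ℤ, (inner ℂ ((cfc (fun s : ℝ => ‖f (a ^ (2 * j) * s)‖ ^ 2) T) F) F : ℂ).re) ∧
    (∑' j : ℤ, (inner ℂ ((cfc (fun s : ℝ => ‖f (a ^ (2 * j) * s)‖ ^ 2) T) F) F : ℂ).re) ≤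
      B * ‖F - P F‖ ^ 2 := by
  have hfcont : Continuous f := by
    have hfe : f = fun s : ℝ => (s : ℂ) ^ l * f₀ s := funext hf
    rw [hfe]
    exact (Complex.continuous_ofReal.pow l).mul f₀.continuous
  have hgc : ∀ j : ℤ, Continuous (fun s : ℝ => ‖f (a ^ (2 * j) * s)‖ ^ 2) := by
    intro j
    exact ((hfcont.comp (continuous_const.mul continuous_id)).norm.pow 2)
  have hg0 : ∀ (j : ℤ) (s : ℝ), 0 ≤ ‖f (a ^ (2 * j) * s)‖ ^ 2 := fun j s => by positivity
  have hgzero : ∀ j : ℤ, ‖f (a ^ (2 * j) * 0)‖ ^ 2 = 0 := by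
    intro j
    rw [mul_zero, hf 0]
    simp [zero_pow (by omega : l ≠ 0)]
  have hker : ∀ (j : ℤ) (x : H), T x = 0 →
      cfc (fun s : ℝ => ‖f (a ^ (2 * j) * s)‖ ^ 2) T x = 0 := by
    intro j x hx
    have key : ∀ s : ℝ, ‖f (a ^ (2 * j) * s)‖ ^ 2 =
        s * ((a ^ (2 * j)) ^ (2 * l) * s ^ (2 * l - 1) * ‖f₀ (a ^ (2 * j) * s)‖ ^ 2) := by
      intro s
      set u := a ^ (2 * j) * s with hu
      rw [hf u, norm_mul, norm_pow, Complex.norm_real]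
      rw [mul_pow]
      have h1 : (‖u‖ ^ l) ^ 2 = (u ^ 2) ^ l := by
        rw [← pow_mul, mul_comm l 2, pow_mul, Real.norm_eq_abs, sq_abs]
      have h2 : (u ^ 2) ^ l = u ^ (2 * l) := by rw [← pow_mul]
      have h3 : u ^ (2 * l) = (a ^ (2 * j)) ^ (2 * l) * s ^ (2 * l) := by
        rw [hu]; exact mul_pow _ _ _
      have h4 : s ^ (2 * l) = s * s ^ (2 * l - 1) := by
        conv_lhs => rw [show 2 * l = 1 + (2 * l - 1) by omega]
        rw [pow_add, pow_one]
      rw [h1, h2, h3, h4]; ring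
    rw [show (fun s : ℝ => ‖f (a ^ (2 * j) * s)‖ ^ 2)
        = (fun s : ℝ => s * ((a ^ (2 * j)) ^ (2 * l) * s ^ (2 * l - 1)
            * ‖f₀ (a ^ (2 * j) * s)‖ ^ 2)) from funext key]
    apply my_ker_vanish T hT.isSelfAdjoint _ _ x hx
    fun_prop
  have hPF : T (P F) = 0 := (hP F).1
  exact main_aux T hT (fun j (s : ℝ) => ‖f (a ^ (2 * j) * s)‖ ^ 2) hgc hg0 hgzero hker
    A B hA hAB hDaub F (P F) hPF (hP F).2
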